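/- The function H defined by the dynamic programming recurrences — base case H(d, {d}) = 0 for destinations d, subset merging H(v, S) = min over nonempty F ⊊ S of (H(v,F) + H(v, S\F)) combined with relaxation H(v,S) = min over edges (v,u) of (H(u,S) + max_{d∈S} x(d) · e(v,u)), iterated to a fixed point — equals the true minimum Steiner-flow cost δ(v, S) for every node v and nonempty destination subset S. -/

import Mathlib

namespace OST

variable {V : Type} [DecidableEq V]

/-- A feasible flow for the outflow-constrained minimum flow problem. -/
structure Feasible (E : V → V → Prop) (s : V) (D : Set V) (x : V → ℝ)
    (f : V → V → ℝ) : Prop where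
  nonneg : ∀ i j, 0 ≤ f i j
  support : ∀ i j, ¬ E i j → f i j = 0
  /-- at every non-source node, every outflow value is bounded by some inflow value
      (max outflow ≤ max inflow) -/
  conserve : ∀ i, i ≠ s → ∀ j, ∃ k, f i j ≤ f k i
  /-- every destination receives inflow at least its demand -/
  demand : ∀ d ∈ D, ∃ i, x d ≤ f i d

/-- Total weighted cost of a flow. -/
noncomputable def cost [Fintype V] (e f : V → V → ℝ) : ℝ :=
  ∑ i, ∑ j, e i j * f i j

/-- The (undirected) flow-carrying edge relation. -/
def carry (f : V → V → ℝ) (a b : V) : Prop := 0 < f a b ∨ 0 < f b a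

/-- Directed reachability inside a set of directed edges. -/
def reach (T : Set (V × V)) (a b : V) : Prop :=
  Relation.ReflTransGen (fun p q => (p, q) ∈ T) a b

/-- `T` is a tree rooted at `v`, edges directed away from the root. -/
structure IsRootedTree (E : V → V → Prop) (v : V) (T : Set (V × V)) : Prop where
  edges : ∀ p ∈ T, E p.1 p.2
  parent_unique : ∀ u u' w, (u, w) ∈ T → (u', w) ∈ T → u = u'
  root_no_parent : ∀ u, (u, v) ∉ T
  reach_root : ∀ p ∈ T, reach T v p.1

/-- The rooted edge set `T` connects `v` to every node of `S`. -/
def Spans (T : Set (V × V)) (v : V) (S : Set V) : Prop := ∀ d ∈ S, reach T v d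

/-- Maximum demand among destinations of `S` lying below node `w` in `T`
    (`0` if there are none, by convention of `sSup` on `ℝ`). -/
noncomputable def maxBelow (T : Set (V × V)) (S : Set V) (x : V → ℝ) (w : V) : ℝ :=
  sSup (x '' {d ∈ S | reach T w d})

/-- Steiner-flow cost of a rooted tree: each edge is charged its weight times the
    maximum demand among destinations of `S` below it. -/
noncomputable def treeCost (e : V → V → ℝ) (x : V → ℝ) (S : Set V)
    (T : Finset (V × V)) : ℝ :=
  ∑ p ∈ T, e p.1 p.2 * maxBelow (↑T) S x p.2

/-- Minimum Steiner-flow cost from root `v` to destination set `S`. -/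
noncomputable def delta (E : V → V → Prop) (e : V → V → ℝ) (x : V → ℝ)
    (v : V) (S : Set V) : ℝ :=
  sInf {c | ∃ T : Finset (V × V),
    IsRootedTree E v ↑T ∧ Spans (↑T) v S ∧ c = treeCost e x S T}

/-- `l` lists the successive vertices of a walk starting at the given vertex. -/
def IsWalk (R : V → V → Prop) : V → List V → Prop
  | _, [] => True
  | a, b :: l => R a b ∧ IsWalk R b l

/-- Total edge weight of a walk. -/
noncomputable def walkCost (e : V → V → ℝ) : V → List V → ℝ
  | _, [] => 0
  | a, b :: l => e a b + walkCost e b l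

/-- Weighted shortest-path distance. -/
noncomputable def dist (E : V → V → Prop) (e : V → V → ℝ) (a b : V) : ℝ :=
  sInf {c | ∃ l : List V, IsWalk E a l ∧
    (a :: l).getLast (List.cons_ne_nil a l) = b ∧ c = walkCost e a l}

/-- Hop distance in a directed relation. -/
noncomputable def hopDist (R : V → V → Prop) (a b : V) : ℕ :=
  sInf {n | ∃ l : List V, IsWalk R a l ∧
    (a :: l).getLast (List.cons_ne_nil a l) = b ∧ l.length = n}

/-- A feasible flow supported on the rooted tree `T`. -/
structure TreeFeasible (T : Set (V × V)) (D : Set V) (x : V → ℝ)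
    (f : V → V → ℝ) : Prop where
  nonneg : ∀ i j, 0 ≤ f i j
  support : ∀ i j, (i, j) ∉ T → f i j = 0
  /-- flow is nonincreasing away from the root -/
  mono : ∀ u w z, (u, w) ∈ T → (w, z) ∈ T → f w z ≤ f u w
  /-- each destination's parent edge carries at least its demand -/
  demand : ∀ d ∈ D, ∀ u, (u, d) ∈ T → x d ≤ f u d


open scoped Classical

section Aux
set_option linter.unusedSectionVars false
set_option linter.unusedVariables false

open Classical in
noncomputable instance : DecidableEq V := Classical.decEq V

variable {T T' : Set (V × V)} {S S' : Set V} {x : V → ℝ} {v a b w d : V}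

lemma reach_mono (h : T ⊆ T') (hr : reach T a b) : reach T' a b :=
  Relation.ReflTransGen.mono (fun p q hpq => h hpq) _ _ hr

/-- end point of a walk -/
def wlast : V → List V → V
  | a, [] => a
  | _, b :: l => wlast b l

lemma getLast_eq_wlast : ∀ (l : List V) (a : V),
    (a :: l).getLast (List.cons_ne_nil a l) = wlast a l
  | [], a => rfl
  | b :: l, a => by
      rw [List.getLast_cons (List.cons_ne_nil b l)]
      exact getLast_eq_wlast l b

lemma isWalk_append {R : V → V → Prop} : ∀ (l l₂ : List V) (a : V),
    IsWalk R a (l ++ l₂) ↔ IsWalk R a l ∧ IsWalk R (wlast a l) l₂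
  | [], l₂, a => by simp [IsWalk, wlast]
  | b :: l, l₂, a => by
      simp [IsWalk, wlast, isWalk_append l l₂ b, and_assoc]

lemma wlast_append : ∀ (l l₂ : List V) (a : V), wlast a (l ++ l₂) = wlast (wlast a l) l₂
  | [], l₂, a => rfl
  | b :: l, l₂, a => wlast_append l l₂ b

lemma reach_iff_walk : reach T a b ↔
    ∃ l, IsWalk (fun p q => (p, q) ∈ T) a l ∧ wlast a l = b := by
  constructor
  · intro h
    induction h with
    | refl => exact ⟨[], trivial, rfl⟩
    | @tail b c _ hbc ih =>
        obtain ⟨l, hw, hl⟩ := ih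
        refine ⟨l ++ [c], ?_, ?_⟩
        · rw [isWalk_append]
          refine ⟨hw, ?_, trivial⟩
          show (wlast a l, c) ∈ T
          rw [hl]; exact hbc
        · rw [wlast_append]; rfl
  · rintro ⟨l, hw, rfl⟩
    induction l generalizing a with
    | nil => exact Relation.ReflTransGen.refl
    | cons c l ih =>
        exact Relation.ReflTransGen.head hw.1 (ih hw.2)

end Aux
section Aux2
set_option linter.unusedSectionVars false
set_option linter.unusedVariables false

variable [Fintype V] {E : V → V → Prop} {T T' : Set (V × V)} {S S' : Set V} {e x : V → ℝ}
  {v a b c w z d u : V}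

/-- the step relation of an edge set -/
def stepRel (T : Set (V × V)) : V → V → Prop := fun p q => (p, q) ∈ T

lemma hop_le {l : List V} (hw : IsWalk (stepRel T) v l) (hl : wlast v l = w) :
    hopDist (stepRel T) v w ≤ l.length :=
  Nat.sInf_le ⟨l, hw, by rw [getLast_eq_wlast]; exact hl, rfl⟩

lemma hop_mem (h : reach T v w) : ∃ l : List V, IsWalk (stepRel T) v l ∧
    wlast v l = w ∧ l.length = hopDist (stepRel T) v w := by
  have hne : {n | ∃ l : List V, IsWalk (stepRel T) v l ∧
      (v :: l).getLast (List.cons_ne_nil v l) = w ∧ l.length = n}.Nonempty := by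
    obtain ⟨l, hw, hl⟩ := reach_iff_walk.1 h
    exact ⟨l.length, l, hw, by rw [getLast_eq_wlast]; exact hl, rfl⟩
  obtain ⟨l, hw, hl, hlen⟩ := Nat.sInf_mem hne
  exact ⟨l, hw, by rw [← getLast_eq_wlast]; exact hl, hlen⟩

lemma hop_succ (hT : IsRootedTree E v T) (hab : (a, b) ∈ T) :
    hopDist (stepRel T) v b = hopDist (stepRel T) v a + 1 := by
  have hra : reach T v a := hT.reach_root (a, b) hab
  have hne : b ≠ v := by rintro rfl; exact hT.root_no_parent a hab
  apply le_antisymm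
  · obtain ⟨l, hw, hl, hlen⟩ := hop_mem hra
    have : hopDist (stepRel T) v b ≤ (l ++ [b]).length := by
      apply hop_le
      · rw [isWalk_append]
        refine ⟨hw, ?_, trivial⟩
        show (wlast v l, b) ∈ T
        rw [hl]; exact hab
      · rw [wlast_append]; rfl
    simpa [hlen] using this
  · have hrb : reach T v b := Relation.ReflTransGen.tail hra hab
    obtain ⟨l, hw, hl, hlen⟩ := hop_mem hrb
    rcases List.eq_nil_or_concat l with rfl | ⟨l', c, rfl⟩
    all_goals try simp only [List.concat_eq_append] at hw hl hlen
    · exact absurd hl hne.symm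
    · rw [wlast_append] at hl
      have hc : c = b := hl
      rw [isWalk_append] at hw
      have hw21 : (wlast v l', b) ∈ T := hc ▸ hw.2.1
      have hpar : wlast v l' = a := hT.parent_unique _ _ _ hw21 hab
      have : hopDist (stepRel T) v a ≤ l'.length := hop_le hw.1 hpar
      have hlen' : l'.length + 1 = hopDist (stepRel T) v b := by
        simpa using hlen
      omega

lemma hop_le_of_reach (hT : IsRootedTree E v T) (hab : reach T a b) :
    hopDist (stepRel T) v a ≤ hopDist (stepRel T) v b := by
  induction hab with
  | refl => exact le_refl _
  | tail _ hcb ih => rw [hop_succ hT hcb]; omega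

lemma tree_acyclic (hT : IsRootedTree E v T) (hab : (a, b) ∈ T) (hba : reach T b a) :
    False := by
  have h1 := hop_le_of_reach hT hba
  have h2 := hop_succ hT hab
  omega

lemma maxBelow_nonneg (hxS : ∀ d ∈ S, 0 ≤ x d) : 0 ≤ maxBelow T S x w :=
  Real.sSup_nonneg (by rintro y ⟨d, ⟨hd, _⟩, rfl⟩; exact hxS d hd)

lemma le_maxBelow (hd : d ∈ S) (hr : reach T w d) : x d ≤ maxBelow T S x w :=
  le_csSup (Set.Finite.bddAbove (Set.toFinite _)) ⟨d, ⟨hd, hr⟩, rfl⟩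

lemma maxBelow_le {c : ℝ} (hb : ∀ d ∈ S, reach T w d → x d ≤ c) (hc : 0 ≤ c) :
    maxBelow T S x w ≤ c :=
  Real.sSup_le (by rintro y ⟨d, ⟨hd, hr⟩, rfl⟩; exact hb d hd hr) hc

lemma maxBelow_mono (hxS' : ∀ d ∈ S', 0 ≤ x d) (hS : S ⊆ S') (hTT : T ⊆ T') :
    maxBelow T S x w ≤ maxBelow T' S' x w :=
  maxBelow_le (fun d hd hr => le_maxBelow (hS hd) (reach_mono hTT hr))
    (maxBelow_nonneg hxS')

end Aux2
section Aux3
set_option linter.unusedSectionVars false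
set_option linter.unusedVariables false

variable [Fintype V] {E : V → V → Prop} {S S' : Set V} {e : V → V → ℝ} {x : V → ℝ}
  {v a b c w z d u : V}

lemma treeCost_nonneg {T : Finset (V × V)} (he : ∀ p ∈ T, 0 ≤ e p.1 p.2)
    (hxS : ∀ d ∈ S, 0 ≤ x d) : 0 ≤ treeCost e x S T :=
  Finset.sum_nonneg fun p hp => mul_nonneg (he p hp) (maxBelow_nonneg hxS)

lemma treeCost_mono_dest {T : Finset (V × V)} (he : ∀ p ∈ T, 0 ≤ e p.1 p.2)
    (hxS' : ∀ d ∈ S', 0 ≤ x d) (hS : S ⊆ S') :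
    treeCost e x S T ≤ treeCost e x S' T :=
  Finset.sum_le_sum fun p hp =>
    mul_le_mul_of_nonneg_left (maxBelow_mono hxS' hS (le_refl _)) (he p hp)

/-- the defining set of `delta` -/
def deltaSet (E : V → V → Prop) (e : V → V → ℝ) (x : V → ℝ) (v : V) (S : Set V) : Set ℝ :=
  {c | ∃ T : Finset (V × V),
    IsRootedTree E v ↑T ∧ Spans (↑T) v S ∧ c = treeCost e x S T}

lemma delta_eq : delta E e x v S = sInf (deltaSet E e x v S) := rfl

lemma deltaSet_finite : (deltaSet E e x v S).Finite := by
  apply Set.Finite.subset (Set.finite_range (fun T : Finset (V × V) => treeCost e x S T))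
  rintro c ⟨T, _, _, rfl⟩
  exact ⟨T, rfl⟩

lemma deltaSet_nonneg (hepos : ∀ i j, E i j → 0 < e i j) (hxS : ∀ d ∈ S, 0 ≤ x d) :
    ∀ c ∈ deltaSet E e x v S, 0 ≤ c := by
  rintro c ⟨T, hT, _, rfl⟩
  exact treeCost_nonneg (fun p hp => (hepos _ _ (hT.edges p hp)).le) hxS

lemma delta_le_treeCost (hepos : ∀ i j, E i j → 0 < e i j) (hxS : ∀ d ∈ S, 0 ≤ x d)
    {T : Finset (V × V)} (hT : IsRootedTree E v ↑T) (hsp : Spans (↑T) v S) :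
    delta E e x v S ≤ treeCost e x S T :=
  csInf_le ⟨0, fun c hc => deltaSet_nonneg hepos hxS c hc⟩ ⟨T, hT, hsp, rfl⟩

lemma delta_nonneg (hepos : ∀ i j, E i j → 0 < e i j) (hxS : ∀ d ∈ S, 0 ≤ x d) :
    0 ≤ delta E e x v S :=
  Real.sInf_nonneg (deltaSet_nonneg hepos hxS)

lemma exists_spanning_tree (hconn : ∀ a b : V, Relation.ReflTransGen E a b) (v : V) :
    ∃ T : Finset (V × V), IsRootedTree E v ↑T ∧ ∀ w : V, reach (↑T) v w := by
  classical
  set 𝒯 : Finset (Finset (V × V)) :=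
    Finset.univ.filter (fun T => IsRootedTree E v ↑T) with h𝒯
  have hemp : (∅ : Finset (V × V)) ∈ 𝒯 := by
    simp only [h𝒯, Finset.mem_filter, Finset.mem_univ, true_and]
    constructor
    · rintro p hp; simp at hp
    · rintro u u' w h; simp at h
    · rintro u h; simp at h
    · rintro p hp; simp at hp
  obtain ⟨T, hTmem, hmax⟩ := 𝒯.exists_max_image
    (fun T => (Finset.univ.filter (fun w => reach (↑T) v w)).card) ⟨∅, hemp⟩
  have hT : IsRootedTree E v ↑T := by
    simpa [h𝒯] using hTmem
  refine ⟨T, hT, ?_⟩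
  by_contra hw
  push_neg at hw
  obtain ⟨w₀, hw₀⟩ := hw
  -- find a crossing edge
  have hcross : ∃ p q : V, E p q ∧ reach (↑T) v p ∧ ¬ reach (↑T) v q := by
    have : ∀ a b : V, Relation.ReflTransGen E a b → reach (↑T) v a →
        ¬ reach (↑T) v b → ∃ p q : V, E p q ∧ reach (↑T) v p ∧ ¬ reach (↑T) v q := by
      intro a b hab
      induction hab with
      | refl => intro h1 h2; exact absurd h1 h2
      | @tail c b' hac hcb ih =>
          intro h1 h2
          by_cases hc : reach (↑T) v c
          · exact ⟨c, b', hcb, hc, h2⟩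
          · exact ih h1 hc
    exact this v w₀ (hconn v w₀) Relation.ReflTransGen.refl hw₀
  obtain ⟨p, q, hpq, hrp, hnq⟩ := hcross
  set T' : Finset (V × V) := insert (p, q) T with hT'
  have hsub : (↑T : Set (V × V)) ⊆ ↑T' := by
    intro r hr; simp [hT', Finset.mem_insert]; right; exact hr
  have hqnt : ∀ u, (u, q) ∉ T := by
    intro u hu
    exact hnq (Relation.ReflTransGen.tail (hT.reach_root (u, q) hu) hu)
  have hqv : q ≠ v := fun h => hnq (h ▸ Relation.ReflTransGen.refl)
  have hT'tree : IsRootedTree E v ↑T' := by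
    constructor
    · rintro r hr
      rcases Finset.mem_insert.1 hr with h | h
      · subst h; exact hpq
      · exact hT.edges r h
    · rintro u u' w h1 h2
      rcases Finset.mem_insert.1 h1 with h1 | h1 <;>
        rcases Finset.mem_insert.1 h2 with h2 | h2
      · rw [Prod.mk.injEq] at h1 h2; rw [h1.1, h2.1]
      · exfalso; rw [Prod.mk.injEq] at h1; exact hqnt u' (h1.2 ▸ h2)
      · exfalso; rw [Prod.mk.injEq] at h2; exact hqnt u (h2.2 ▸ h1)
      · exact hT.parent_unique u u' w h1 h2
    · rintro u hu
      rcases Finset.mem_insert.1 hu with h | h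
      · rw [Prod.mk.injEq] at h; exact hqv h.2.symm
      · exact hT.root_no_parent u h
    · rintro r hr
      rcases Finset.mem_insert.1 hr with h | h
      · subst h; exact reach_mono hsub hrp
      · exact reach_mono hsub (hT.reach_root r h)
  have hT'mem : T' ∈ 𝒯 := by simp [h𝒯, hT'tree]
  have hle := hmax T' hT'mem
  have hlt : (Finset.univ.filter (fun w => reach (↑T) v w)).card <
      (Finset.univ.filter (fun w => reach (↑T') v w)).card := by
    apply Finset.card_lt_card
    constructor
    · intro w hw
      simp only [Finset.mem_filter, Finset.mem_univ, true_and] at hw ⊢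
      exact reach_mono hsub hw
    · intro hsub2
      have hq : q ∈ Finset.univ.filter (fun w => reach (↑T') v w) := by
        simp only [Finset.mem_filter, Finset.mem_univ, true_and]
        exact Relation.ReflTransGen.tail (reach_mono hsub hrp)
          (by simp [hT'])
      have := hsub2 hq
      simp only [Finset.mem_filter, Finset.mem_univ, true_and] at this
      exact hnq this
  omega

end Aux3
section Aux4
set_option linter.unusedSectionVars false
set_option linter.unusedVariables false

variable [Fintype V] {E : V → V → Prop} {S S' : Set V} {e : V → V → ℝ} {x : V → ℝ}
  {v a b c w z d u : V}

lemma sSup_img_nonneg (hxS : ∀ d ∈ S, 0 ≤ x d) : 0 ≤ sSup (x '' S) :=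
  Real.sSup_nonneg (by rintro y ⟨d, hd, rfl⟩; exact hxS d hd)

lemma maxBelow_le_sSup {T : Set (V × V)} (hxS : ∀ d ∈ S, 0 ≤ x d) :
    maxBelow T S x w ≤ sSup (x '' S) :=
  maxBelow_le (fun d hd _ => le_csSup (Set.Finite.bddAbove (Set.toFinite _)) ⟨d, hd, rfl⟩)
    (sSup_img_nonneg hxS)

lemma delta_relax (hconn : ∀ a b : V, Relation.ReflTransGen E a b)
    (hepos : ∀ i j, E i j → 0 < e i j) (hxS : ∀ d ∈ S, 0 ≤ x d)
    (hvu : E v u) :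
    delta E e x v S ≤ delta E e x u S + sSup (x '' S) * e v u := by
  classical
  by_cases hvu' : v = u
  · subst hvu'
    have : 0 ≤ sSup (x '' S) * e v v :=
      mul_nonneg (sSup_img_nonneg hxS) (hepos v v hvu).le
    linarith
  -- deltaSet u S is nonempty
  obtain ⟨T₀, hT₀, hsp₀⟩ := exists_spanning_tree hconn u
  have hne : (deltaSet E e x u S).Nonempty := ⟨_, T₀, hT₀, fun d _ => hsp₀ d, rfl⟩
  rw [show delta E e x u S = sInf (deltaSet E e x u S) from rfl]
  rw [← sub_le_iff_le_add]
  apply le_csInf hne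
  rintro c ⟨T, hT, hsp, rfl⟩
  rw [sub_le_iff_le_add]
  set T' : Finset (V × V) := insert (v, u) (T.filter fun p => p.2 ≠ v ∧ p.2 ≠ u)
    with hT'def
  have hfil : ∀ p : V × V, p ∈ T.filter (fun p => p.2 ≠ v ∧ p.2 ≠ u) →
      p ∈ T ∧ p.2 ≠ v ∧ p.2 ≠ u := by
    intro p hp; simpa using hp
  have hmemT' : ∀ p : V × V, p ∈ T' ↔ p = (v, u) ∨ (p ∈ T ∧ p.2 ≠ v ∧ p.2 ≠ u) := by
    intro p; simp only [hT'def, Finset.mem_insert, Finset.mem_filter, Finset.mem_univ, true_and]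
  -- reach in T from u transfers to reach in T' from v
  have hA : ∀ w, reach (↑T) u w → reach (↑T') v w := by
    intro w hw
    induction hw with
    | refl =>
        exact Relation.ReflTransGen.single (by simp [hT'def])
    | @tail w' w hw' hedge ih =>
        by_cases h1 : w = v
        · exact h1 ▸ Relation.ReflTransGen.refl
        by_cases h2 : w = u
        · exact h2 ▸ Relation.ReflTransGen.single (by simp [hT'def])
        · refine Relation.ReflTransGen.tail ih ?_
          show (w', w) ∈ T'
          rw [hmemT']
          exact Or.inr ⟨hedge, h1, h2⟩
  -- reach in T' avoiding v stays in T
  have hB : ∀ w d', w ≠ v → reach (↑T') w d' → reach (↑T) w d' := by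
    intro w d' hwv hr
    induction hr using Relation.ReflTransGen.head_induction_on with
    | refl => exact Relation.ReflTransGen.refl
    | @head p q hpq hqd ih =>
        have hpq' : (p, q) ∈ T' := hpq
        rw [hmemT'] at hpq'
        rcases hpq' with h | ⟨hmem, hqv, hqu⟩
        · exact absurd (congrArg Prod.fst h) hwv
        · exact Relation.ReflTransGen.head hmem (ih hqv)
  have hT'tree : IsRootedTree E v ↑T' := by
    constructor
    · rintro p hp
      rw [Finset.mem_coe, hmemT'] at hp
      rcases hp with rfl | ⟨hp, _⟩
      · exact hvu
      · exact hT.edges p hp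
    · rintro p p' q h1 h2
      rw [Finset.mem_coe, hmemT'] at h1 h2
      rcases h1 with h1 | ⟨h1, h1v, h1u⟩ <;> rcases h2 with h2 | ⟨h2, h2v, h2u⟩
      · rw [Prod.mk.injEq] at h1 h2; rw [h1.1, h2.1]
      · exfalso; rw [Prod.mk.injEq] at h1; exact h2u h1.2
      · exfalso; rw [Prod.mk.injEq] at h2; exact h1u h2.2
      · exact hT.parent_unique p p' q h1 h2
    · rintro p hp
      rw [Finset.mem_coe, hmemT'] at hp
      rcases hp with h | ⟨hp, hpv, hpu⟩
      · rw [Prod.mk.injEq] at h; exact hvu' h.2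
      · exact hpv rfl
    · rintro p hp
      rw [Finset.mem_coe, hmemT'] at hp
      rcases hp with rfl | ⟨hp, hpv, hpu⟩
      · exact Relation.ReflTransGen.refl
      · exact hA p.1 (hT.reach_root p hp)
  have hsp' : Spans (↑T') v S := fun d' hd' => hA d' (hsp d' hd')
  have hcost : treeCost e x S T' ≤ sSup (x '' S) * e v u + treeCost e x S T := by
    have hnotmem : (v, u) ∉ T.filter (fun p => p.2 ≠ v ∧ p.2 ≠ u) := by
      intro h; exact ((hfil _ h).2.2) rfl
    rw [show treeCost e x S T' =
      e v u * maxBelow (↑T') S x u +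
        ∑ p ∈ T.filter (fun p => p.2 ≠ v ∧ p.2 ≠ u),
          e p.1 p.2 * maxBelow (↑T') S x p.2 from Finset.sum_insert hnotmem]
    have h1 : e v u * maxBelow (↑T') S x u ≤ sSup (x '' S) * e v u := by
      rw [mul_comm (sSup (x '' S)) (e v u)]
      exact mul_le_mul_of_nonneg_left (maxBelow_le_sSup hxS) (hepos v u hvu).le
    have h2 : ∑ p ∈ T.filter (fun p => p.2 ≠ v ∧ p.2 ≠ u),
        e p.1 p.2 * maxBelow (↑T') S x p.2 ≤ treeCost e x S T := by
      have hterm : ∀ p ∈ T.filter (fun p => p.2 ≠ v ∧ p.2 ≠ u),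
          e p.1 p.2 * maxBelow (↑T') S x p.2 ≤ e p.1 p.2 * maxBelow (↑T) S x p.2 := by
        intro p hp
        obtain ⟨hpT, hpv, hpu⟩ := hfil p hp
        apply mul_le_mul_of_nonneg_left _ (hepos _ _ (hT.edges p hpT)).le
        apply maxBelow_le (fun d' hd' hr => le_maxBelow hd' (hB p.2 d' hpv hr))
          (maxBelow_nonneg hxS)
      calc ∑ p ∈ T.filter (fun p => p.2 ≠ v ∧ p.2 ≠ u),
            e p.1 p.2 * maxBelow (↑T') S x p.2
          ≤ ∑ p ∈ T.filter (fun p => p.2 ≠ v ∧ p.2 ≠ u),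
            e p.1 p.2 * maxBelow (↑T) S x p.2 := Finset.sum_le_sum hterm
        _ ≤ treeCost e x S T := by
            apply Finset.sum_le_sum_of_subset_of_nonneg (Finset.filter_subset _ _)
            intro p hp _
            exact mul_nonneg (hepos _ _ (hT.edges p hp)).le (maxBelow_nonneg hxS)
    linarith
  have hd' : delta E e x v S ≤ treeCost e x S T' := delta_le_treeCost hepos hxS hT'tree hsp'
  linarith

end Aux4
section Aux5
set_option linter.unusedSectionVars false
set_option linter.unusedVariables false

variable [Fintype V] {E : V → V → Prop} {S S' F : Set V} {e : V → V → ℝ} {x : V → ℝ}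
  {D : Set V} {H : V → Set V → ℝ} {v a b c w z d u : V}

/-- the set of DP options -/
def optSet (H : V → Set V → ℝ) (E : V → V → Prop) (e : V → V → ℝ) (x : V → ℝ)
    (v : V) (S : Set V) : Set ℝ :=
  {c | S = {v} ∧ c = 0} ∪
    {c | ∃ F : Set V, F.Nonempty ∧ F ⊂ S ∧ c = H v F + H v (S \ F)} ∪
    {c | ∃ u : V, E v u ∧ c = H u S + sSup (x '' S) * e v u}

lemma optSet_finite : (optSet H E e x v S).Finite := by
  apply Set.Finite.union
  apply Set.Finite.union
  · exact (Set.finite_singleton 0).subset (by rintro c ⟨_, rfl⟩; simp)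
  · exact (Set.finite_range (fun F : Set V => H v F + H v (S \ F))).subset
      (by rintro c ⟨F, _, _, rfl⟩; exact ⟨F, rfl⟩)
  · exact (Set.finite_range (fun u : V => H u S + sSup (x '' S) * e v u)).subset
      (by rintro c ⟨u, _, rfl⟩; exact ⟨u, rfl⟩)

lemma optSet_nonempty (hconn : ∀ a b : V, Relation.ReflTransGen E a b)
    (hS : S.Nonempty) : (optSet H E e x v S).Nonempty := by
  by_cases hSv : S = {v}
  · exact ⟨0, Or.inl (Or.inl ⟨hSv, rfl⟩)⟩
  obtain ⟨d, hd⟩ := hS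
  by_cases hnt : ∃ d' ∈ S, d' ≠ d
  · obtain ⟨d', hd', hdd⟩ := hnt
    refine ⟨H v {d} + H v (S \ {d}), Or.inl (Or.inr ⟨{d}, ⟨d, rfl⟩, ?_, rfl⟩)⟩
    constructor
    · simpa using hd
    · intro hsub
      exact hdd (hsub hd')
  · push_neg at hnt
    have hSd : S = {d} := Set.eq_singleton_iff_unique_mem.2 ⟨hd, hnt⟩
    have hdv : d ≠ v := by rintro rfl; exact hSv hSd
    rcases Relation.ReflTransGen.cases_head (hconn v d) with h | ⟨u, hvu, _⟩
    · exact absurd h.symm hdv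
    · exact ⟨_, Or.inr ⟨u, hvu, rfl⟩⟩

section withH

variable (hfix : ∀ v : V, ∀ S : Set V, S.Nonempty → S ⊆ D →
      H v S = sInf (optSet H E e x v S))

include hfix in
lemma H_le_opt (hS : S.Nonempty) (hSD : S ⊆ D) {co : ℝ}
    (hc : co ∈ optSet H E e x v S) : H v S ≤ co := by
  rw [hfix v S hS hSD]
  exact csInf_le (Set.Finite.bddBelow optSet_finite) hc

include hfix in
lemma H_mem_opt (hconn : ∀ a b : V, Relation.ReflTransGen E a b)
    (hS : S.Nonempty) (hSD : S ⊆ D) : H v S ∈ optSet H E e x v S := by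
  rw [hfix v S hS hSD]
  exact Set.Nonempty.csInf_mem (optSet_nonempty hconn hS) optSet_finite

end withH

lemma reach_to_root {T : Set (V × V)} (hT : IsRootedTree E v T) (h : reach T w v) :
    w = v := by
  rcases Relation.ReflTransGen.cases_tail h with h | ⟨c, _, hc⟩
  · exact h.symm
  · exact absurd hc (hT.root_no_parent c)

lemma reach_filter_src {T : Finset (V × V)} {c0 : V} :
    ∀ w, reach (↑T) c0 w → reach (↑(T.filter fun p => reach (↑T) c0 p.1)) c0 w := by
  intro w hw
  induction hw with
  | refl => exact Relation.ReflTransGen.refl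
  | @tail w' w hw' hedge ih =>
      refine Relation.ReflTransGen.tail ih ?_
      show (w', w) ∈ T.filter fun p => reach (↑T) c0 p.1
      simp only [Finset.mem_filter]
      exact ⟨hedge, hw'⟩

lemma reach_avoid {T : Finset (V × V)} {c0 : V} :
    ∀ w, reach (↑T) v w → ¬ reach (↑T) c0 w →
      reach (↑(T.filter fun p => ¬ reach (↑T) c0 p.2)) v w := by
  intro w hw
  induction hw with
  | refl => intro _; exact Relation.ReflTransGen.refl
  | @tail w' w hw' hedge ih =>
      intro hnw
      have hnw' : ¬ reach (↑T) c0 w' := fun h => hnw (Relation.ReflTransGen.tail h hedge)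
      refine Relation.ReflTransGen.tail (ih hnw') ?_
      show (w', w) ∈ T.filter fun p => ¬ reach (↑T) c0 p.2
      simp only [Finset.mem_filter]
      exact ⟨hedge, hnw⟩

end Aux5
section Aux6
set_option linter.unusedSectionVars false
set_option linter.unusedVariables false

variable [Fintype V] {E : V → V → Prop} {S : Set V} {e : V → V → ℝ} {x : V → ℝ}
  {D : Set V} {H : V → Set V → ℝ} {v : V}

lemma H_le_treeCost (hepos : ∀ i j, E i j → 0 < e i j)
    (hx : ∀ d ∈ D, 0 < x d)
    (hbase : ∀ d ∈ D, H d {d} = 0)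
    (hfix : ∀ v : V, ∀ S : Set V, S.Nonempty → S ⊆ D →
      H v S = sInf (optSet H E e x v S)) :
    ∀ n : ℕ, ∀ (v : V) (S : Set V) (T : Finset (V × V)), T.card + S.ncard ≤ n →
      S.Nonempty → S ⊆ D → IsRootedTree E v ↑T → Spans (↑T) v S →
      H v S ≤ treeCost e x S T := by
  intro n
  induction n with
  | zero =>
      intro v S T hcard hne hSD hT hsp
      have := (Set.ncard_pos (Set.toFinite S)).2 hne
      omega
  | succ n ih =>
      intro v S T hcard hne hSD hT hsp
      have hxS0 : ∀ d ∈ S, 0 ≤ x d := fun d hd => (hx d (hSD hd)).le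
      have he0 : ∀ p ∈ T, 0 ≤ e p.1 p.2 := fun p hp => (hepos _ _ (hT.edges p hp)).le
      by_cases hSv : S = {v}
      · have h0 : H v S ≤ 0 := H_le_opt hfix hne hSD (Or.inl (Or.inl ⟨hSv, rfl⟩))
        exact h0.trans (treeCost_nonneg he0 hxS0)
      by_cases hvS : v ∈ S
      · -- peel off the root from the destination set
        have hFsub : {v} ⊂ S := by
          constructor
          · simpa using hvS
          · intro hsub
            exact hSv (le_antisymm (fun w hw => hsub hw) (by simpa using hvS))
        have hmerge : H v S ≤ H v {v} + H v (S \ {v}) :=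
          H_le_opt hfix hne hSD (Or.inl (Or.inr ⟨{v}, ⟨v, rfl⟩, hFsub, rfl⟩))
        have hb : H v {v} = 0 := hbase v (hSD hvS)
        have hS'ne : (S \ {v}).Nonempty := by
          rcases Set.exists_of_ssubset hFsub with ⟨w, hwS, hwv⟩
          exact ⟨w, hwS, by simpa using hwv⟩
        have hcard' : T.card + (S \ {v}).ncard ≤ n := by
          have : (S \ {v}).ncard < S.ncard :=
            Set.ncard_lt_ncard (Set.sdiff_singleton_ssubset.2 hvS) (Set.toFinite S)
          omega
        have hrec : H v (S \ {v}) ≤ treeCost e x (S \ {v}) T :=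
          ih v (S \ {v}) T hcard' hS'ne (fun w hw => hSD hw.1) hT
            (fun w hw => hsp w hw.1)
        have hmono : treeCost e x (S \ {v}) T ≤ treeCost e x S T :=
          treeCost_mono_dest he0 hxS0 Set.diff_subset
        linarith
      · -- the root is not a destination
        obtain ⟨d0, hd0⟩ := id hne
        have hd0v : d0 ≠ v := by rintro rfl; exact hvS hd0
        rcases Relation.ReflTransGen.cases_head (hsp d0 hd0) with h | ⟨c0, hvc0, hc0d0⟩
        · exact absurd h.symm hd0v
        have hvc0T : (v, c0) ∈ T := hvc0
        have hc0v : c0 ≠ v := by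
          intro h; apply hT.root_no_parent v; rw [h] at hvc0T; exact hvc0T
        have hnc0v : ¬ reach (↑T) c0 v := by
          intro h; exact hc0v (reach_to_root hT h)
        by_cases hcov : ∀ d ∈ S, reach (↑T) c0 d
        · -- single branch: relax along (v, c0)
          set Tc : Finset (V × V) := T.filter (fun p => reach (↑T) c0 p.1) with hTc
          have hTcsub : Tc ⊆ T := Finset.filter_subset _ _
          have hTcmem : ∀ p : V × V, p ∈ Tc ↔ p ∈ T ∧ reach (↑T) c0 p.1 := by
            intro p; simp [hTc]
          have hvc0Tc : (v, c0) ∉ Tc := by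
            rw [hTcmem]; rintro ⟨_, h⟩; exact hnc0v h
          have hTctree : IsRootedTree E c0 ↑Tc := by
            constructor
            · rintro p hp; exact hT.edges p (hTcsub hp)
            · rintro p p' q h1 h2
              exact hT.parent_unique p p' q (hTcsub h1) (hTcsub h2)
            · rintro p hp
              rw [Finset.mem_coe, hTcmem] at hp
              exact tree_acyclic hT hp.1 hp.2
            · rintro p hp
              rw [Finset.mem_coe, hTcmem] at hp
              exact reach_filter_src p.1 hp.2
          have hspc : Spans (↑Tc) c0 S := fun d hd => reach_filter_src d (hcov d hd)
          have hcard' : Tc.card + S.ncard ≤ n := by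
            have : Tc.card < T.card :=
              Finset.card_lt_card ⟨hTcsub, fun h => hvc0Tc (h hvc0T)⟩
            omega
          have hrec : H c0 S ≤ treeCost e x S Tc := ih c0 S Tc hcard' hne hSD hTctree hspc
          have hrelax : H v S ≤ H c0 S + sSup (x '' S) * e v c0 :=
            H_le_opt hfix hne hSD (Or.inr ⟨c0, hT.edges _ hvc0T, rfl⟩)
          have hmBc0 : maxBelow (↑T) S x c0 = sSup (x '' S) := by
            apply le_antisymm (maxBelow_le_sSup hxS0)
            apply Real.sSup_le _ (maxBelow_nonneg hxS0)
            rintro y ⟨d, hd, rfl⟩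
            exact le_maxBelow hd (hcov d hd)
          have hcost : e v c0 * sSup (x '' S) + treeCost e x S Tc ≤ treeCost e x S T := by
            have hins : insert (v, c0) Tc ⊆ T := by
              intro p hp
              rcases Finset.mem_insert.1 hp with rfl | hp
              · exact hvc0T
              · exact hTcsub hp
            have h1 : ∑ p ∈ insert (v, c0) Tc, e p.1 p.2 * maxBelow (↑T) S x p.2 ≤
                treeCost e x S T := by
              apply Finset.sum_le_sum_of_subset_of_nonneg hins
              intro p hp _
              exact mul_nonneg (he0 p hp) (maxBelow_nonneg hxS0)
            rw [Finset.sum_insert hvc0Tc] at h1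
            have h2 : treeCost e x S Tc ≤ ∑ p ∈ Tc, e p.1 p.2 * maxBelow (↑T) S x p.2 := by
              apply Finset.sum_le_sum
              intro p hp
              exact mul_le_mul_of_nonneg_left
                (maxBelow_mono hxS0 (le_refl _) (fun q hq => hTcsub hq)) (he0 p (hTcsub hp))
            rw [hmBc0] at h1
            linarith
          linarith
        · -- genuine split at the root
          push_neg at hcov
          obtain ⟨d1, hd1S, hd1⟩ := hcov
          set F : Set V := {d ∈ S | reach (↑T) c0 d} with hF
          have hd0F : d0 ∈ F := ⟨hd0, hc0d0⟩
          have hd1F : d1 ∈ S \ F := ⟨hd1S, fun h => hd1 h.2⟩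
          have hFS : F ⊂ S := by
            constructor
            · intro w hw; exact hw.1
            · intro hsub; exact hd1F.2 (hsub hd1S)
          have hFD : F ⊆ D := fun w hw => hSD hw.1
          set TF : Finset (V × V) := insert (v, c0) (T.filter (fun p => reach (↑T) c0 p.1))
            with hTFdef
          set T' : Finset (V × V) := T.filter (fun p => ¬ reach (↑T) c0 p.2) with hT'def
          have hTFmem : ∀ p : V × V, p ∈ TF ↔ p = (v, c0) ∨ (p ∈ T ∧ reach (↑T) c0 p.1) := by
            intro p; simp [hTFdef]
          have hT'mem : ∀ p : V × V, p ∈ T' ↔ p ∈ T ∧ ¬ reach (↑T) c0 p.2 := by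
            intro p; simp [hT'def]
          have hTFsubT : TF ⊆ T := by
            intro p hp
            rcases (hTFmem p).1 hp with rfl | hp
            · exact hvc0T
            · exact hp.1
          have hT'subT : T' ⊆ T := Finset.filter_subset _ _
          have hfilsubTF : T.filter (fun p => reach (↑T) c0 p.1) ⊆ TF :=
            Finset.subset_insert _ _
          have hTFtree : IsRootedTree E v ↑TF := by
            constructor
            · rintro p hp; exact hT.edges p (hTFsubT hp)
            · rintro p p' q h1 h2
              rw [Finset.mem_coe, hTFmem] at h1 h2
              rcases h1 with h1 | h1 <;> rcases h2 with h2 | h2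
              · rw [Prod.mk.injEq] at h1 h2; rw [h1.1, h2.1]
              · exfalso
                rw [Prod.mk.injEq] at h1
                exact tree_acyclic hT h2.1 (h1.2 ▸ h2.2)
              · exfalso
                rw [Prod.mk.injEq] at h2
                exact tree_acyclic hT h1.1 (h2.2 ▸ h1.2)
              · exact hT.parent_unique p p' q h1.1 h2.1
            · rintro p hp
              rw [Finset.mem_coe, hTFmem] at hp
              rcases hp with h | hp
              · rw [Prod.mk.injEq] at h; exact hc0v h.2.symm
              · exact hT.root_no_parent p hp.1
            · rintro p hp
              rw [Finset.mem_coe, hTFmem] at hp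
              rcases hp with rfl | hp
              · exact Relation.ReflTransGen.refl
              · refine Relation.ReflTransGen.head (show (v, c0) ∈ TF by
                  rw [hTFmem]; exact Or.inl rfl) ?_
                exact reach_mono (fun q hq => hfilsubTF hq) (reach_filter_src p.1 hp.2)
          have hspF : Spans (↑TF) v F := by
            intro d hd
            refine Relation.ReflTransGen.head (show (v, c0) ∈ TF by
              rw [hTFmem]; exact Or.inl rfl) ?_
            exact reach_mono (fun q hq => hfilsubTF hq) (reach_filter_src d hd.2)
          have hT'tree : IsRootedTree E v ↑T' := by
            constructor
            · rintro p hp; exact hT.edges p (hT'subT hp)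
            · rintro p p' q h1 h2
              exact hT.parent_unique p p' q (hT'subT h1) (hT'subT h2)
            · rintro p hp
              exact hT.root_no_parent p (hT'subT hp)
            · rintro p hp
              rw [Finset.mem_coe, hT'mem] at hp
              have hnp : ¬ reach (↑T) c0 p.1 := fun h =>
                hp.2 (Relation.ReflTransGen.tail h hp.1)
              exact reach_avoid p.1 (hT.reach_root p hp.1) hnp
          have hspS' : Spans (↑T') v (S \ F) := by
            intro d hd
            have hnd : ¬ reach (↑T) c0 d := fun h => hd.2 ⟨hd.1, h⟩
            exact reach_avoid d (hsp d hd.1) hnd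
          have hmerge : H v S ≤ H v F + H v (S \ F) :=
            H_le_opt hfix hne hSD (Or.inl (Or.inr ⟨F, ⟨d0, hd0F⟩, hFS, rfl⟩))
          have hcardF : TF.card + F.ncard ≤ n := by
            have h1 : TF.card ≤ T.card := Finset.card_le_card hTFsubT
            have h2 : F.ncard < S.ncard := Set.ncard_lt_ncard hFS (Set.toFinite S)
            omega
          have hcardS' : T'.card + (S \ F).ncard ≤ n := by
            have h1 : T'.card ≤ T.card := Finset.card_le_card hT'subT
            have h2 : (S \ F).ncard < S.ncard := by
              apply Set.ncard_lt_ncard _ (Set.toFinite S)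
              constructor
              · exact Set.diff_subset
              · intro hsub; exact (hsub hd0).2 hd0F
            omega
          have hrecF : H v F ≤ treeCost e x F TF :=
            ih v F TF hcardF ⟨d0, hd0F⟩ hFD hTFtree hspF
          have hrecS' : H v (S \ F) ≤ treeCost e x (S \ F) T' :=
            ih v (S \ F) T' hcardS' ⟨d1, hd1F⟩ (fun w hw => hSD hw.1) hT'tree hspS'
          have hdis : Disjoint TF T' := by
            rw [Finset.disjoint_left]
            intro p hp hp'
            rw [hT'mem] at hp'
            apply hp'.2
            rcases (hTFmem p).1 hp with rfl | hp
            · exact Relation.ReflTransGen.refl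
            · exact Relation.ReflTransGen.tail hp.2 hp.1
          have hcost : treeCost e x F TF + treeCost e x (S \ F) T' ≤ treeCost e x S T := by
            have hsubU : TF ∪ T' ⊆ T := Finset.union_subset hTFsubT hT'subT
            have h1 : ∑ p ∈ TF ∪ T', e p.1 p.2 * maxBelow (↑T) S x p.2 ≤
                treeCost e x S T := by
              apply Finset.sum_le_sum_of_subset_of_nonneg hsubU
              intro p hp _
              exact mul_nonneg (he0 p hp) (maxBelow_nonneg hxS0)
            rw [Finset.sum_union hdis] at h1
            have h2 : treeCost e x F TF ≤
                ∑ p ∈ TF, e p.1 p.2 * maxBelow (↑T) S x p.2 := by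
              apply Finset.sum_le_sum
              intro p hp
              exact mul_le_mul_of_nonneg_left
                (maxBelow_mono hxS0 (fun w hw => hw.1) (fun q hq => hTFsubT hq))
                (he0 p (hTFsubT hp))
            have h3 : treeCost e x (S \ F) T' ≤
                ∑ p ∈ T', e p.1 p.2 * maxBelow (↑T) S x p.2 := by
              apply Finset.sum_le_sum
              intro p hp
              exact mul_le_mul_of_nonneg_left
                (maxBelow_mono hxS0 Set.diff_subset (fun q hq => hT'subT hq))
                (he0 p (hT'subT hp))
            linarith
          linarith

end Aux6
section Aux7
set_option linter.unusedSectionVars false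
set_option linter.unusedVariables false

variable [Fintype V] {E : V → V → Prop} {S1 S2 : Set V} {e : V → V → ℝ} {x : V → ℝ}
  {v : V}

lemma delta_merge (hepos : ∀ i j, E i j → 0 < e i j)
    (hx1 : ∀ d ∈ S1, 0 ≤ x d) (hx2 : ∀ d ∈ S2, 0 ≤ x d)
    {T1 T2 : Finset (V × V)}
    (h1 : IsRootedTree E v ↑T1) (hs1 : Spans (↑T1) v S1)
    (h2 : IsRootedTree E v ↑T2) (hs2 : Spans (↑T2) v S2) :
    delta E e x v (S1 ∪ S2) ≤ treeCost e x S1 T1 + treeCost e x S2 T2 := by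
  classical
  set m1 : V → ℝ := fun w => maxBelow (↑T1) S1 x w with hm1
  set m2 : V → ℝ := fun w => maxBelow (↑T2) S2 x w with hm2
  set K1 : Finset (V × V) :=
    T1.filter (fun p => (∃ a, (a, p.2) ∈ T2) → m2 p.2 ≤ m1 p.2) with hK1
  set K2 : Finset (V × V) :=
    T2.filter (fun p => (∃ a, (a, p.2) ∈ T1) → m1 p.2 < m2 p.2) with hK2
  set T : Finset (V × V) := K1 ∪ K2 with hTdef
  set gg : V × V → ℝ := fun p => if p ∈ K1 then m1 p.2 else m2 p.2 with hgg
  have hK1mem : ∀ p : V × V,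
      p ∈ K1 ↔ p ∈ T1 ∧ ((∃ a, (a, p.2) ∈ T2) → m2 p.2 ≤ m1 p.2) := by
    intro p; simp [hK1]
  have hK2mem : ∀ p : V × V,
      p ∈ K2 ↔ p ∈ T2 ∧ ((∃ a, (a, p.2) ∈ T1) → m1 p.2 < m2 p.2) := by
    intro p; simp [hK2]
  have hTmem : ∀ p : V × V, p ∈ T ↔ p ∈ K1 ∨ p ∈ K2 := by
    intro p; simp [hTdef]
  have hK12 : ∀ p : V × V, p ∈ K1 → p ∈ K2 → False := by
    intro p hp1 hp2
    rw [hK1mem] at hp1; rw [hK2mem] at hp2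
    have ha := hp1.2 ⟨p.1, hp2.1⟩
    have hb := hp2.2 ⟨p.1, hp1.1⟩
    linarith
  have ggK1 : ∀ p : V × V, p ∈ K1 → gg p = m1 p.2 := by
    intro p hp; simp [hgg, hp]
  have ggK2 : ∀ p : V × V, p ∈ K2 → gg p = m2 p.2 := by
    intro p hp
    have : p ∉ K1 := fun h => hK12 p h hp
    simp [hgg, this]
  have hm1mono : ∀ b z : V, (b, z) ∈ T1 → m1 z ≤ m1 b := by
    intro b z hbz
    exact maxBelow_le (fun d hd hr => le_maxBelow hd (Relation.ReflTransGen.head hbz hr))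
      (maxBelow_nonneg hx1)
  have hm2mono : ∀ b z : V, (b, z) ∈ T2 → m2 z ≤ m2 b := by
    intro b z hbz
    exact maxBelow_le (fun d hd hr => le_maxBelow hd (Relation.ReflTransGen.head hbz hr))
      (maxBelow_nonneg hx2)
  have hm1nonneg : ∀ w, 0 ≤ m1 w := fun w => maxBelow_nonneg hx1
  have hm2nonneg : ∀ w, 0 ≤ m2 w := fun w => maxBelow_nonneg hx2
  have gg_nonneg : ∀ p : V × V, 0 ≤ gg p := by
    intro p
    by_cases h : p ∈ K1 <;> simp [hgg, h, hm1nonneg, hm2nonneg]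
  -- every node of either tree has a parent in T
  have tgt_ne_v : ∀ p : V × V, p ∈ T → p.2 ≠ v := by
    rintro ⟨a, b⟩ hp hb
    subst hb
    rcases (hTmem _).1 hp with h | h
    · exact h1.root_no_parent a ((hK1mem _).1 h).1
    · exact h2.root_no_parent a ((hK2mem _).1 h).1
  have hasP1_of : ∀ b, reach (↑T1) v b → b ≠ v → ∃ a, (a, b) ∈ T1 := by
    intro b hb hbv
    rcases Relation.ReflTransGen.cases_tail hb with h | ⟨c, _, hc⟩
    · exact absurd h hbv
    · exact ⟨c, hc⟩
  have hasP2_of : ∀ b, reach (↑T2) v b → b ≠ v → ∃ a, (a, b) ∈ T2 := by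
    intro b hb hbv
    rcases Relation.ReflTransGen.cases_tail hb with h | ⟨c, _, hc⟩
    · exact absurd h hbv
    · exact ⟨c, hc⟩
  have hparent : ∀ b : V, ((∃ a, (a, b) ∈ T1) ∨ (∃ a, (a, b) ∈ T2)) →
      ∃ a, (a, b) ∈ T := by
    intro b hb
    by_cases hP1 : ∃ a, (a, b) ∈ T1
    · obtain ⟨a, ha⟩ := hP1
      by_cases hP2 : ∃ a, (a, b) ∈ T2
      · by_cases hle : m2 b ≤ m1 b
        · exact ⟨a, (hTmem _).2 (Or.inl ((hK1mem _).2 ⟨ha, fun _ => hle⟩))⟩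
        · obtain ⟨a', ha'⟩ := hP2
          refine ⟨a', (hTmem _).2 (Or.inr ((hK2mem _).2 ⟨ha', fun _ => ?_⟩))⟩
          linarith [lt_of_not_ge hle]
      · exact ⟨a, (hTmem _).2 (Or.inl ((hK1mem _).2 ⟨ha, fun h => absurd h hP2⟩))⟩
    · rcases hb with h | ⟨a, ha⟩
      · exact absurd h hP1
      · exact ⟨a, (hTmem _).2 (Or.inr ((hK2mem _).2 ⟨ha, fun h => absurd h hP1⟩))⟩
  -- demand at destinations
  have demand_T : ∀ d, d ∈ S1 ∪ S2 → ∀ a, (a, d) ∈ T → x d ≤ gg (a, d) := by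
    intro d hd a haT
    have hdv : d ≠ v := tgt_ne_v (a, d) haT
    rcases hd with hd | hd
    · have hx1d : x d ≤ m1 d := le_maxBelow hd Relation.ReflTransGen.refl
      by_cases hK : (a, d) ∈ K1
      · rw [ggK1 _ hK]; exact hx1d
      · have hK' : (a, d) ∈ K2 := ((hTmem _).1 haT).resolve_left hK
        rw [ggK2 _ hK']
        have hP1 : ∃ a', (a', d) ∈ T1 := hasP1_of d (hs1 d hd) hdv
        have := ((hK2mem _).1 hK').2 hP1
        linarith
    · have hx2d : x d ≤ m2 d := le_maxBelow hd Relation.ReflTransGen.refl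
      by_cases hK : (a, d) ∈ K1
      · rw [ggK1 _ hK]
        have hP2 : ∃ a', (a', d) ∈ T2 := hasP2_of d (hs2 d hd) hdv
        have := ((hK1mem _).1 hK).2 hP2
        linarith
      · have hK' : (a, d) ∈ K2 := ((hTmem _).1 haT).resolve_left hK
        rw [ggK2 _ hK']; exact hx2d
  -- monotonicity of gg along T
  have mono_T : ∀ a b z, (a, b) ∈ T → (b, z) ∈ T → gg (b, z) ≤ gg (a, b) := by
    intro a b z habT hbzT
    have hbv : b ≠ v := tgt_ne_v (a, b) habT
    by_cases hbz1 : (b, z) ∈ K1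
    · rw [ggK1 _ hbz1]
      have hbzT1 : (b, z) ∈ T1 := ((hK1mem _).1 hbz1).1
      have hm1z : m1 z ≤ m1 b := hm1mono b z hbzT1
      have hP1b : ∃ a', (a', b) ∈ T1 :=
        hasP1_of b (h1.reach_root (b, z) hbzT1) hbv
      by_cases hab1 : (a, b) ∈ K1
      · rw [ggK1 _ hab1]; exact hm1z
      · have hab2 : (a, b) ∈ K2 := ((hTmem _).1 habT).resolve_left hab1
        rw [ggK2 _ hab2]
        have := ((hK2mem _).1 hab2).2 hP1b
        linarith
    · have hbz2 : (b, z) ∈ K2 := ((hTmem _).1 hbzT).resolve_left hbz1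
      rw [ggK2 _ hbz2]
      have hbzT2 : (b, z) ∈ T2 := ((hK2mem _).1 hbz2).1
      have hm2z : m2 z ≤ m2 b := hm2mono b z hbzT2
      have hP2b : ∃ a', (a', b) ∈ T2 :=
        hasP2_of b (h2.reach_root (b, z) hbzT2) hbv
      by_cases hab1 : (a, b) ∈ K1
      · rw [ggK1 _ hab1]
        have := ((hK1mem _).1 hab1).2 hP2b
        linarith
      · have hab2 : (a, b) ∈ K2 := ((hTmem _).1 habT).resolve_left hab1
        rw [ggK2 _ hab2]; exact hm2z
  -- bound on demands below an edge
  have belowBound : ∀ d, d ∈ S1 ∪ S2 → ∀ b, reach (↑T) b d →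
      ∀ a, (a, b) ∈ T → x d ≤ gg (a, b) := by
    intro d hd b hr
    induction hr using Relation.ReflTransGen.head_induction_on with
    | refl => exact fun a ha => demand_T d hd a ha
    | @head p c hpc hcd ih =>
        intro a hap
        have hpcT : (p, c) ∈ T := hpc
        exact le_trans (ih p hpcT) (mono_T a p c hap hpcT)
  -- strict lexicographic measure along T
  set kv : V × V → ℕ := fun p => if p ∈ K1 then 1 else 0 with hkv
  set dp : V × V → ℕ := fun p =>
    if p ∈ K1 then hopDist (stepRel (↑T1)) v p.2 else hopDist (stepRel (↑T2)) v p.2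
    with hdp
  set Mlt : V × V → V × V → Prop := fun p q =>
    gg p < gg q ∨ (gg p = gg q ∧ (kv p < kv q ∨ (kv p = kv q ∧ dp q < dp p))) with hMlt
  have Mlt_trans : ∀ p q r, Mlt p q → Mlt q r → Mlt p r := by
    intro p q r hpq hqr
    rcases hpq with h | ⟨he, h⟩ <;> rcases hqr with h' | ⟨he', h'⟩
    · exact Or.inl (lt_trans h h')
    · exact Or.inl (he' ▸ h)
    · exact Or.inl (he ▸ h')
    · refine Or.inr ⟨he.trans he', ?_⟩
      rcases h with h | ⟨hk, h⟩ <;> rcases h' with h' | ⟨hk', h'⟩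
      · exact Or.inl (lt_trans h h')
      · exact Or.inl (hk' ▸ h)
      · exact Or.inl (hk ▸ h')
      · exact Or.inr ⟨hk.trans hk', lt_trans h' h⟩
  have Mlt_irrefl : ∀ p, ¬ Mlt p p := by
    intro p hp
    rcases hp with h | ⟨_, h | ⟨_, h⟩⟩
    · exact lt_irrefl _ h
    · exact lt_irrefl _ h
    · exact lt_irrefl _ h
  have step_strict : ∀ a b z, (a, b) ∈ T → (b, z) ∈ T → Mlt (b, z) (a, b) := by
    intro a b z habT hbzT
    have hbv : b ≠ v := tgt_ne_v (a, b) habT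
    by_cases hbz1 : (b, z) ∈ K1
    · have hbzT1 : (b, z) ∈ T1 := ((hK1mem _).1 hbz1).1
      have hm1z : m1 z ≤ m1 b := hm1mono b z hbzT1
      have hP1b : ∃ a', (a', b) ∈ T1 :=
        hasP1_of b (h1.reach_root (b, z) hbzT1) hbv
      have hhop : hopDist (stepRel (↑T1)) v z = hopDist (stepRel (↑T1)) v b + 1 :=
        hop_succ h1 hbzT1
      by_cases hab1 : (a, b) ∈ K1
      · have habT1 : (a, b) ∈ T1 := ((hK1mem _).1 hab1).1
        rcases lt_or_eq_of_le hm1z with h | h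
        · exact Or.inl (by rw [ggK1 _ hbz1, ggK1 _ hab1]; exact h)
        · refine Or.inr ⟨by rw [ggK1 _ hbz1, ggK1 _ hab1]; exact h, Or.inr ⟨?_, ?_⟩⟩
          · simp [hkv, hbz1, hab1]
          · simp only [hdp, hbz1, hab1, if_pos]
            omega
      · have hab2 : (a, b) ∈ K2 := ((hTmem _).1 habT).resolve_left hab1
        have := ((hK2mem _).1 hab2).2 hP1b
        refine Or.inl ?_
        rw [ggK1 _ hbz1, ggK2 _ hab2]
        linarith
    · have hbz2 : (b, z) ∈ K2 := ((hTmem _).1 hbzT).resolve_left hbz1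
      have hbzT2 : (b, z) ∈ T2 := ((hK2mem _).1 hbz2).1
      have hm2z : m2 z ≤ m2 b := hm2mono b z hbzT2
      have hP2b : ∃ a', (a', b) ∈ T2 :=
        hasP2_of b (h2.reach_root (b, z) hbzT2) hbv
      have hhop : hopDist (stepRel (↑T2)) v z = hopDist (stepRel (↑T2)) v b + 1 :=
        hop_succ h2 hbzT2
      by_cases hab1 : (a, b) ∈ K1
      · have := ((hK1mem _).1 hab1).2 hP2b
        rcases lt_or_eq_of_le (le_trans hm2z this) with h | h
        · exact Or.inl (by rw [ggK2 _ hbz2, ggK1 _ hab1]; exact h)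
        · refine Or.inr ⟨by rw [ggK2 _ hbz2, ggK1 _ hab1]; exact h, Or.inl ?_⟩
          simp [hkv, hbz1, hab1]
      · have hab2 : (a, b) ∈ K2 := ((hTmem _).1 habT).resolve_left hab1
        rcases lt_or_eq_of_le hm2z with h | h
        · exact Or.inl (by rw [ggK2 _ hbz2, ggK2 _ hab2]; exact h)
        · refine Or.inr ⟨by rw [ggK2 _ hbz2, ggK2 _ hab2]; exact h, Or.inr ⟨?_, ?_⟩⟩
          · simp [hkv, hbz1, hab1]
          · simp only [hdp, if_neg hbz1, if_neg hab1]
            omega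
  have Lstar : ∀ p q, reach (↑T) p q → ∀ y, (y, p) ∈ T → ∀ z, (q, z) ∈ T →
      Mlt (q, z) (y, p) := by
    intro p q hr
    induction hr using Relation.ReflTransGen.head_induction_on with
    | refl => exact fun y hy z hz => step_strict y q z hy hz
    | @head p' c hpc hcq ih =>
        intro y hy z hz
        have hpcT : (p', c) ∈ T := hpc
        exact Mlt_trans _ _ _ (ih p' hpcT z hz) (step_strict y p' c hy hpcT)
  have NC : ∀ a b, (a, b) ∈ T → reach (↑T) b a → False := by
    intro a b hab hba
    exact Mlt_irrefl (a, b) (Lstar b a hba a hab b hab)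
  -- every node reachable in T1 or T2 is reachable in T
  have reach_T : ∀ w, (reach (↑T1) v w ∨ reach (↑T2) v w) → reach (↑T) v w := by
    intro w hw
    by_contra hnw
    have hwBad : ¬ reach (↑T) v w ∧ ((∃ a, (a, w) ∈ T1) ∨ (∃ a, (a, w) ∈ T2)) := by
      refine ⟨hnw, ?_⟩
      have hwv : w ≠ v := by rintro rfl; exact hnw Relation.ReflTransGen.refl
      rcases hw with h | h
      · exact Or.inl (hasP1_of w h hwv)
      · exact Or.inr (hasP2_of w h hwv)
    set Bad : V → Prop := fun u =>
      ¬ reach (↑T) v u ∧ ((∃ a, (a, u) ∈ T1) ∨ (∃ a, (a, u) ∈ T2)) with hBad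
    set pfun : V → V := fun u =>
      if h : ∃ a, (a, u) ∈ T ∧ ¬ reach (↑T) v a then h.choose else u with hpfun
    have hstep : ∀ u, Bad u → (pfun u, u) ∈ T ∧ Bad (pfun u) := by
      intro u hu
      obtain ⟨a0, ha0⟩ := hparent u hu.2
      have hna0 : ¬ reach (↑T) v a0 := by
        intro h; exact hu.1 (Relation.ReflTransGen.tail h ha0)
      have hex : ∃ a, (a, u) ∈ T ∧ ¬ reach (↑T) v a := ⟨a0, ha0, hna0⟩
      have hpf : pfun u = hex.choose := by rw [hpfun]; exact dif_pos hex
      obtain ⟨hmem, hnr⟩ := hex.choose_spec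
      rw [hpf]
      refine ⟨hmem, hnr, ?_⟩
      have hnev : hex.choose ≠ v := by
        rintro h; rw [h] at hnr; exact hnr Relation.ReflTransGen.refl
      rcases (hTmem _).1 hmem with h | h
      · have := h1.reach_root _ ((hK1mem _).1 h).1
        exact Or.inl (hasP1_of _ this hnev)
      · have := h2.reach_root _ ((hK2mem _).1 h).1
        exact Or.inr (hasP2_of _ this hnev)
    set u : ℕ → V := fun k => pfun^[k] w with hu
    have hiter : ∀ k, Bad (u k) := by
      intro k
      induction k with
      | zero => exact hwBad
      | succ k ih =>
          have : u (k + 1) = pfun (u k) := by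
            rw [hu]; simp [Function.iterate_succ_apply']
          rw [this]
          exact (hstep (u k) ih).2
    have hedge : ∀ k, (u (k + 1), u k) ∈ T := by
      intro k
      have : u (k + 1) = pfun (u k) := by
        rw [hu]; simp [Function.iterate_succ_apply']
      rw [this]
      exact (hstep (u k) (hiter k)).1
    have hchain : ∀ m k, reach (↑T) (u (m + k)) (u m) := by
      intro m k
      induction k with
      | zero => exact Relation.ReflTransGen.refl
      | succ k ih =>
          have : (u (m + k + 1), u (m + k)) ∈ T := hedge (m + k)
          exact Relation.ReflTransGen.head this ih
    obtain ⟨i, _, j, _, hij, heq⟩ :=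
      Finset.exists_ne_map_eq_of_card_lt_of_maps_to
        (s := Finset.range (Fintype.card V + 1)) (t := Finset.univ)
        (by simp [Finset.card_range])
        (fun k _ => Finset.mem_univ (u k))
    rcases Nat.lt_or_ge i j with hlt | hge
    · have hreach : reach (↑T) (u i) (u (i + 1)) := by
        have : reach (↑T) (u j) (u (i + 1)) := by
          have hj : j = (i + 1) + (j - i - 1) := by omega
          rw [hj]; exact hchain (i + 1) (j - i - 1)
        rw [← heq] at this; exact this
      exact NC _ _ (hedge i) hreach
    · have hlt : j < i := by omega
      have hreach : reach (↑T) (u j) (u (j + 1)) := by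
        have : reach (↑T) (u i) (u (j + 1)) := by
          have hi : i = (j + 1) + (i - j - 1) := by omega
          rw [hi]; exact hchain (j + 1) (i - j - 1)
        rw [heq] at this; exact this
      exact NC _ _ (hedge j) hreach
  -- T is a rooted tree spanning S1 ∪ S2
  have hTtree : IsRootedTree E v ↑T := by
    constructor
    · rintro p hp
      rcases (hTmem p).1 hp with h | h
      · exact h1.edges p ((hK1mem _).1 h).1
      · exact h2.edges p ((hK2mem _).1 h).1
    · rintro p p' q hq1 hq2
      rw [Finset.mem_coe, hTmem] at hq1 hq2
      rcases hq1 with h | h <;> rcases hq2 with h' | h'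
      · exact h1.parent_unique p p' q ((hK1mem _).1 h).1 ((hK1mem _).1 h').1
      · exfalso
        have c1 := ((hK1mem _).1 h).2 ⟨p', ((hK2mem _).1 h').1⟩
        have c2 := ((hK2mem _).1 h').2 ⟨p, ((hK1mem _).1 h).1⟩
        simp only at c1 c2
        linarith
      · exfalso
        have c1 := ((hK1mem _).1 h').2 ⟨p, ((hK2mem _).1 h).1⟩
        have c2 := ((hK2mem _).1 h).2 ⟨p', ((hK1mem _).1 h').1⟩
        simp only at c1 c2
        linarith
      · exact h2.parent_unique p p' q ((hK2mem _).1 h).1 ((hK2mem _).1 h').1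
    · rintro p hp
      rw [Finset.mem_coe, hTmem] at hp
      rcases hp with h | h
      · exact h1.root_no_parent p ((hK1mem _).1 h).1
      · exact h2.root_no_parent p ((hK2mem _).1 h).1
    · rintro p hp
      rw [Finset.mem_coe, hTmem] at hp
      rcases hp with h | h
      · exact reach_T p.1 (Or.inl (h1.reach_root p ((hK1mem _).1 h).1))
      · exact reach_T p.1 (Or.inr (h2.reach_root p ((hK2mem _).1 h).1))
  have hTspan : Spans (↑T) v (S1 ∪ S2) := by
    rintro d (hd | hd)
    · exact reach_T d (Or.inl (hs1 d hd))
    · exact reach_T d (Or.inr (hs2 d hd))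
  -- cost bound
  have hx12 : ∀ d ∈ S1 ∪ S2, 0 ≤ x d := by
    rintro d (hd | hd)
    · exact hx1 d hd
    · exact hx2 d hd
  have hcost : treeCost e x (S1 ∪ S2) T ≤ treeCost e x S1 T1 + treeCost e x S2 T2 := by
    have he0 : ∀ p ∈ T, 0 ≤ e p.1 p.2 := fun p hp => (hepos _ _ (hTtree.edges p hp)).le
    have hstep1 : treeCost e x (S1 ∪ S2) T ≤ ∑ p ∈ T, e p.1 p.2 * gg p := by
      apply Finset.sum_le_sum
      intro p hp
      apply mul_le_mul_of_nonneg_left _ (he0 p hp)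
      apply maxBelow_le _ (gg_nonneg p)
      intro d hd hr
      have hpT : (p.1, p.2) ∈ T := by rw [Prod.mk.eta]; exact hp
      exact belowBound d hd p.2 hr p.1 hpT
    have hdisj : Disjoint K1 K2 := by
      rw [Finset.disjoint_left]
      intro p hp hp'
      exact hK12 p hp hp'
    have hsplit : ∑ p ∈ T, e p.1 p.2 * gg p =
        ∑ p ∈ K1, e p.1 p.2 * gg p + ∑ p ∈ K2, e p.1 p.2 * gg p := by
      rw [hTdef]; exact Finset.sum_union hdisj
    have hc1 : ∑ p ∈ K1, e p.1 p.2 * gg p ≤ treeCost e x S1 T1 := by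
      have : ∀ p ∈ K1, e p.1 p.2 * gg p = e p.1 p.2 * m1 p.2 := by
        intro p hp; rw [ggK1 p hp]
      rw [Finset.sum_congr rfl this]
      apply Finset.sum_le_sum_of_subset_of_nonneg (Finset.filter_subset _ _)
      intro p hp _
      exact mul_nonneg (hepos _ _ (h1.edges p hp)).le (hm1nonneg _)
    have hc2 : ∑ p ∈ K2, e p.1 p.2 * gg p ≤ treeCost e x S2 T2 := by
      have : ∀ p ∈ K2, e p.1 p.2 * gg p = e p.1 p.2 * m2 p.2 := by
        intro p hp; rw [ggK2 p hp]
      rw [Finset.sum_congr rfl this]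
      apply Finset.sum_le_sum_of_subset_of_nonneg (Finset.filter_subset _ _)
      intro p hp _
      exact mul_nonneg (hepos _ _ (h2.edges p hp)).le (hm2nonneg _)
    linarith
  exact le_trans (delta_le_treeCost hepos hx12 hTtree hTspan) hcost

end Aux7
/-- any function `H` satisfying the OST dynamic-programming
fixed-point equations (base case, subset merging, and edge relaxation) equals the
true minimum Steiner-flow cost `δ(v, S)` for every node `v` and nonempty `S ⊆ D`. -/
theorem stmt9 [Fintype V] (E : V → V → Prop) (hE : ∀ a b, E a b → E b a)
    (hconn : ∀ a b : V, Relation.ReflTransGen E a b)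
    (e : V → V → ℝ) (hepos : ∀ i j, E i j → 0 < e i j)
    (D : Set V) (x : V → ℝ) (hx : ∀ d ∈ D, 0 < x d)
    (H : V → Set V → ℝ)
    (hbase : ∀ d ∈ D, H d {d} = 0)
    (hfix : ∀ v : V, ∀ S : Set V, S.Nonempty → S ⊆ D →
      H v S = sInf ({c | S = {v} ∧ c = 0} ∪
        {c | ∃ F : Set V, F.Nonempty ∧ F ⊂ S ∧ c = H v F + H v (S \ F)} ∪
        {c | ∃ u : V, E v u ∧ c = H u S + sSup (x '' S) * e v u})) :
    ∀ v : V, ∀ S : Set V, S.Nonempty → S ⊆ D → H v S = delta E e x v S := by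
  have hfix' : ∀ v : V, ∀ S : Set V, S.Nonempty → S ⊆ D →
      H v S = sInf (optSet H E e x v S) := hfix
  have main : ∀ n : ℕ, ∀ S : Set V, S.ncard ≤ n → S.Nonempty → S ⊆ D →
      ∀ v, H v S = delta E e x v S := by
    intro n
    induction n with
    | zero =>
        intro S hcard hne hSD v
        have := (Set.ncard_pos (Set.toFinite S)).2 hne
        omega
    | succ n ih =>
        intro S hcard hne hSD
        have hxS0 : ∀ d ∈ S, 0 ≤ x d := fun d hd => (hx d (hSD hd)).le
        have hdne : ∀ (w : V) (S' : Set V), (deltaSet E e x w S').Nonempty := by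
          intro w S'
          obtain ⟨T0, hT0, hsp0⟩ := exists_spanning_tree hconn w
          exact ⟨_, T0, hT0, fun d _ => hsp0 d, rfl⟩
        have hub : ∀ w, H w S ≤ delta E e x w S := by
          intro w
          apply le_csInf (hdne w S)
          rintro c ⟨T, hT, hsp, rfl⟩
          exact H_le_treeCost hepos hx hbase hfix' (T.card + S.ncard) w S T le_rfl
            hne hSD hT hsp
        by_contra hA
        push_neg at hA
        obtain ⟨v0, hv0⟩ := hA
        have hAne : (Finset.univ.filter
            (fun w => H w S < delta E e x w S)).Nonempty := by
          refine ⟨v0, ?_⟩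
          simp only [Finset.mem_filter, Finset.mem_univ, true_and]
          exact lt_of_le_of_ne (hub v0) hv0
        obtain ⟨v, hvmem, hvmin⟩ := Finset.exists_min_image _ (fun w => H w S) hAne
        simp only [Finset.mem_filter, Finset.mem_univ, true_and] at hvmem
        have hopt : H v S ∈ optSet H E e x v S := H_mem_opt hfix' hconn hne hSD
        rcases hopt with (⟨hSv, hv00⟩ | ⟨F, hFne, hFS, hval⟩) | ⟨u, hvu, hval⟩
        · -- base case: S = {v}
          have hemptree : IsRootedTree E v ↑(∅ : Finset (V × V)) := by
            constructor
            · rintro p hp; simp at hp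
            · rintro p p' q h _; simp at h
            · rintro p h; simp at h
            · rintro p h; simp at h
          have hempspan : Spans (↑(∅ : Finset (V × V))) v S := by
            intro d hd
            rw [hSv] at hd
            rcases hd with rfl
            exact Relation.ReflTransGen.refl
          have hd0 : delta E e x v S ≤ treeCost e x S (∅ : Finset (V × V)) :=
            delta_le_treeCost hepos hxS0 hemptree hempspan
          rw [show treeCost e x S (∅ : Finset (V × V)) = 0 from Finset.sum_empty] at hd0
          rw [hv00] at hvmem
          linarith
        · -- merge case
          have hFD : F ⊆ D := fun w hw => hSD (hFS.1 hw)
          have hSFne : (S \ F).Nonempty := by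
            obtain ⟨w, hwS, hwF⟩ := Set.exists_of_ssubset hFS
            exact ⟨w, hwS, hwF⟩
          have hcardF : F.ncard ≤ n := by
            have := Set.ncard_lt_ncard hFS (Set.toFinite S)
            omega
          have hcardSF : (S \ F).ncard ≤ n := by
            have : (S \ F).ncard < S.ncard := by
              apply Set.ncard_lt_ncard _ (Set.toFinite S)
              obtain ⟨d0, hd0⟩ := hFne
              exact ⟨Set.diff_subset, fun hsub => (hsub (hFS.1 hd0)).2 hd0⟩
            omega
          have hHF : H v F = delta E e x v F := ih F hcardF hFne hFD v
          have hHSF : H v (S \ F) = delta E e x v (S \ F) :=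
            ih (S \ F) hcardSF hSFne (fun w hw => hSD hw.1) v
          obtain ⟨T1, hT1, hsp1, hc1⟩ :=
            Set.Nonempty.csInf_mem (hdne v F) deltaSet_finite
          obtain ⟨T2, hT2, hsp2, hc2⟩ :=
            Set.Nonempty.csInf_mem (hdne v (S \ F)) deltaSet_finite
          have hxF : ∀ d ∈ F, 0 ≤ x d := fun d hd => hxS0 d (hFS.1 hd)
          have hxSF : ∀ d ∈ S \ F, 0 ≤ x d := fun d hd => hxS0 d hd.1
          have hmerge := delta_merge hepos hxF hxSF hT1 hsp1 hT2 hsp2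
          rw [Set.union_diff_cancel hFS.1] at hmerge
          have hc1' : delta E e x v F = treeCost e x F T1 := hc1
          have hc2' : delta E e x v (S \ F) = treeCost e x (S \ F) T2 := hc2
          have hle : delta E e x v S ≤ H v S := by
            rw [hval, hHF, hHSF, hc1', hc2']
            exact hmerge
          linarith
        · -- relax case
          have hMpos : 0 < sSup (x '' S) := by
            obtain ⟨d, hd⟩ := hne
            exact lt_of_lt_of_le (hx d (hSD hd))
              (le_csSup (Set.Finite.bddAbove (Set.toFinite _)) ⟨d, hd, rfl⟩)
          have hrel := delta_relax hconn hepos hxS0 hvu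
          by_cases huA : H u S < delta E e x u S
          · have hmin := hvmin u (by
              simp only [Finset.mem_filter, Finset.mem_univ, true_and]
              exact huA)
            have hpos : 0 < sSup (x '' S) * e v u := mul_pos hMpos (hepos _ _ hvu)
            linarith
          · push_neg at huA
            linarith
  intro v S hne hSD
  exact main S.ncard S le_rfl hne hSD v

end OST
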